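/- Let R be a multiplicatively cancellative commutative semiring of characteristic one (i.e. x ≠ 0 and xy = xz imply y = z). Then for all x, y ∈ R and n ∈ ℕ, (x + y)^n = x^n + y^n. -/

import Mathlib

theorem char_one_frobenius_additive {R : Type*} [CommSemiring R]
    (h1 : (1 : R) + 1 = 1)
    (hcanc : ∀ x y z : R, x ≠ 0 → x * y = x * z → y = z)
    (x y : R) (n : ℕ) : (x + y) ^ n = x ^ n + y ^ n := by
  -- addition is idempotent
  have idem : ∀ t : R, t + t = t := fun t => by
    calc t + t = t * (1 + 1) := by ring
    _ = t := by rw [h1, mul_one]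
  -- a + b = 0 forces a = 0 and b = 0
  have hsum0 : ∀ a b : R, a + b = 0 → a = 0 ∧ b = 0 := by
    intro a b hab
    constructor
    · calc a = a + (a + b) := by rw [hab, add_zero]
      _ = (a + a) + b := by ring
      _ = a + b := by rw [idem]
      _ = 0 := hab
    · calc b = (a + b) + b := by rw [hab, zero_add]
      _ = a + (b + b) := by ring
      _ = a + b := by rw [idem]
      _ = 0 := hab
  -- the square case
  have sq : ∀ a b : R, (a + b) ^ 2 = a ^ 2 + b ^ 2 := by
    intro a b
    by_cases hab : a + b = 0
    · obtain ⟨ha, hb⟩ := hsum0 a b hab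
      subst ha; subst hb; simp [hab]
    · apply hcanc (a + b) _ _ hab
      have h3 : (3 : R) = 1 := by
        have : (3 : R) = 1 + 1 + 1 := by norm_num
        rw [this, h1, h1]
      ring_nf
      rw [h3]
      ring
  -- monotonicity of powers: a + b = b → a^m + b^m = b^m
  have mono : ∀ (a b : R) (m : ℕ), a + b = b → a ^ m + b ^ m = b ^ m := by
    intro a b m hab
    induction m with
    | zero => simpa using h1
    | succ k ih =>
      have hb : b ^ (k + 1) = a * b ^ k + b * b ^ k := by
        calc b ^ (k + 1) = (a + b) * b ^ k := by rw [hab]; ring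
        _ = a * b ^ k + b * b ^ k := by ring
      calc a ^ (k + 1) + b ^ (k + 1)
          = a * a ^ k + (a * b ^ k + b * b ^ k) := by rw [hb]; ring
        _ = a * (a ^ k + b ^ k) + b * b ^ k := by ring
        _ = a * b ^ k + b * b ^ k := by rw [ih]
        _ = b ^ (k + 1) := hb.symm
  -- powers of nonzero elements are nonzero
  have pow_ne : ∀ (a : R) (m : ℕ), a ≠ 0 → a ^ m ≠ 0 := by
    intro a m ha
    induction m with
    | zero =>
      simp only [pow_zero]
      intro h10
      exact ha (by calc a = a * 1 := (mul_one a).symm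
        _ = a * 0 := by rw [h10]
        _ = 0 := mul_zero a)
    | succ k ih =>
      intro hk
      apply ih
      apply hcanc a _ _ ha
      rw [mul_zero, ← pow_succ']
      exact hk
  set s := x + y with hs
  by_cases hs0 : s = 0
  · obtain ⟨hx, hy⟩ := hsum0 x y hs0
    rcases Nat.eq_zero_or_pos n with h | h
    · subst h; simpa using h1.symm
    · rw [hx, hy, hs0, zero_pow h.ne', add_zero]
  · -- powers 2^k
    have pow2 : ∀ k : ℕ, s ^ (2 ^ k) = x ^ (2 ^ k) + y ^ (2 ^ k) := by
      intro k
      induction k with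
      | zero => simp [hs]
      | succ j ih =>
        have h2 : (2 : ℕ) ^ (j + 1) = 2 ^ j * 2 := pow_succ 2 j
        rw [h2, pow_mul, pow_mul, pow_mul, ih, sq]
    -- general n via cancellation
    have hn : n ≤ 2 ^ n := (Nat.lt_two_pow_self (n := n)).le
    set m := 2 ^ n - n with hm
    have hmn : m + n = 2 ^ n := Nat.sub_add_cancel hn
    have hxs : x + s = s := by rw [hs, ← add_assoc, idem]
    have hys : y + s = s := by rw [hs, add_comm x y, ← add_assoc, idem]
    have hxle : x ^ n + s ^ n = s ^ n := mono x s n hxs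
    have hyle : y ^ n + s ^ n = s ^ n := mono y s n hys
    have hxm : x ^ m + s ^ m = s ^ m := mono x s m hxs
    have hym : y ^ m + s ^ m = s ^ m := mono y s m hys
    have e1 : (x ^ n + y ^ n) * s ^ m + s ^ n * s ^ m = s ^ n * s ^ m := by
      calc (x ^ n + y ^ n) * s ^ m + s ^ n * s ^ m
          = (x ^ n + (y ^ n + s ^ n)) * s ^ m := by ring
        _ = (x ^ n + s ^ n) * s ^ m := by rw [hyle]
        _ = s ^ n * s ^ m := by rw [hxle]
    have e2 : x ^ (m + n) + (x ^ n + y ^ n) * s ^ m = (x ^ n + y ^ n) * s ^ m := by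
      calc x ^ (m + n) + (x ^ n + y ^ n) * s ^ m
          = x ^ n * (x ^ m + s ^ m) + y ^ n * s ^ m := by rw [pow_add]; ring
        _ = x ^ n * s ^ m + y ^ n * s ^ m := by rw [hxm]
        _ = (x ^ n + y ^ n) * s ^ m := by ring
    have e3 : y ^ (m + n) + (x ^ n + y ^ n) * s ^ m = (x ^ n + y ^ n) * s ^ m := by
      calc y ^ (m + n) + (x ^ n + y ^ n) * s ^ m
          = y ^ n * (y ^ m + s ^ m) + x ^ n * s ^ m := by rw [pow_add]; ring
        _ = y ^ n * s ^ m + x ^ n * s ^ m := by rw [hym]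
        _ = (x ^ n + y ^ n) * s ^ m := by ring
    have hsmn : s ^ n * s ^ m = x ^ (m + n) + y ^ (m + n) := by
      rw [← pow_add, Nat.add_comm n m, hmn]
      exact pow2 n
    have key : s ^ m * (x ^ n + y ^ n) = s ^ m * s ^ n := by
      calc s ^ m * (x ^ n + y ^ n)
          = (x ^ n + y ^ n) * s ^ m := by ring
        _ = x ^ (m + n) + y ^ (m + n) + (x ^ n + y ^ n) * s ^ m := by
            rw [add_assoc, e3, e2]
        _ = s ^ n * s ^ m + (x ^ n + y ^ n) * s ^ m := by rw [hsmn]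
        _ = (x ^ n + y ^ n) * s ^ m + s ^ n * s ^ m := by ring
        _ = s ^ n * s ^ m := e1
        _ = s ^ m * s ^ n := by ring
    exact (hcanc (s ^ m) _ _ (pow_ne s m hs0) key).symm
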